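/- Let α, β > 0 with α + β > 1 and let τ, ω be positive continuous functions on [a,b]. Suppose f : [a,b] → ℝ is absolutely continuous with f(a)=0 and ∫ₐᵇ |f'(x)|^{α+β} τ(x) dx < ∞. Then ∫ₐᵇ |f(x)|^β |f'(x)|^α ω(x) dx ≤ (α/(α+β))^{α/(α+β)} · L · ∫ₐᵇ |f'(x)|^{α+β} τ(x) dx, where L = [ ∫ₐᵇ ( ∫ₐˣ τ(t)^{1/(1−α−β)} dt )^{α+β−1} ω(x)^{(α+β)/β} τ(x)^{−α/β} dx ]^{β/(α+β)}, assuming L < ∞. -/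

import Mathlib

open MeasureTheory Set intervalIntegral

lemma rpow_gap {θ u v : ℝ} (hθ : 0 ≤ θ) (hu : 0 ≤ u) (huv : u ≤ v) :
    u ^ θ * (v - u) ≤ (v ^ (θ + 1) - u ^ (θ + 1)) / (θ + 1) := by
  have hθ1 : (0:ℝ) < θ + 1 := by linarith
  have h1 : ∫ s in u..v, u ^ θ ≤ ∫ s in u..v, s ^ θ := by
    apply integral_mono_on huv (intervalIntegrable_const)
    · apply ContinuousOn.intervalIntegrable
      apply ContinuousOn.rpow_const continuousOn_id
      intro x hx
      rw [uIcc_of_le huv] at hx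
      rcases eq_or_lt_of_le (hu.trans hx.1) with h0 | h0
      · exact Or.inr hθ
      · exact Or.inl (ne_of_gt h0)
    · intro s hs
      exact Real.rpow_le_rpow hu hs.1 hθ
  have h2 : ∫ s in u..v, s ^ θ = (v ^ (θ+1) - u ^ (θ+1)) / (θ+1) := by
    rw [integral_rpow (Or.inl (by linarith : (-1:ℝ) < θ))]
  have h3 : ∫ s in u..v, (u ^ θ : ℝ) = u ^ θ * (v - u) := by
    rw [intervalIntegral.integral_const, smul_eq_mul, mul_comm]
  linarith [h2 ▸ h3 ▸ h1]

/-- Hölder for interval integrals of nonnegative functions. -/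
lemma holder_interval {a b : ℝ} (p q : ℝ) (hab : a ≤ b) (hpq : p.HolderConjugate q)
    (A B : ℝ → ℝ)
    (hA0 : ∀ x ∈ Icc a b, 0 ≤ A x) (hB0 : ∀ x ∈ Icc a b, 0 ≤ B x)
    (hAm : AEStronglyMeasurable A (volume.restrict (Ioc a b)))
    (hBm : AEStronglyMeasurable B (volume.restrict (Ioc a b)))
    (hAp : IntervalIntegrable (fun x => A x ^ p) volume a b)
    (hBq : IntervalIntegrable (fun x => B x ^ q) volume a b) :
    ∫ x in a..b, A x * B x ≤
      (∫ x in a..b, A x ^ p) ^ (1/p) * (∫ x in a..b, B x ^ q) ^ (1/q) := by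
  have hae : ∀ C : ℝ → ℝ, (∀ x ∈ Icc a b, 0 ≤ C x) →
      0 ≤ᵐ[volume.restrict (Ioc a b)] C := by
    intro C hC
    filter_upwards [ae_restrict_mem measurableSet_Ioc] with x hx
    exact hC x (Ioc_subset_Icc_self hx)
  have mem : ∀ (r : ℝ), 1 < r → ∀ (C : ℝ → ℝ), 0 ≤ᵐ[volume.restrict (Ioc a b)] C →
      AEStronglyMeasurable C (volume.restrict (Ioc a b)) →
      Integrable (fun x => C x ^ r) (volume.restrict (Ioc a b)) →
      MemLp C (ENNReal.ofReal r) (volume.restrict (Ioc a b)) := by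
    intro r hr C hC0 hCm hCr
    have h1 : Integrable (fun x => ‖C x‖ ^ r) (volume.restrict (Ioc a b)) := by
      apply hCr.congr
      filter_upwards [hC0] with x hx
      rw [Real.norm_of_nonneg hx]
    have h2 : MemLp (fun x => ‖C x‖ ^ r) 1 (volume.restrict (Ioc a b)) :=
      memLp_one_iff_integrable.mpr h1
    have hr0 : ENNReal.ofReal r ≠ 0 := by
      simp only [ne_eq, ENNReal.ofReal_eq_zero, not_le]; linarith
    have hrt : ENNReal.ofReal r ≠ ⊤ := ENNReal.ofReal_ne_top
    have hiff := (memLp_norm_rpow_iff (q := ENNReal.ofReal r) (p := ENNReal.ofReal r) hCm hr0 hrt)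
    rw [ENNReal.div_self hr0 hrt, ENNReal.toReal_ofReal (by linarith)] at hiff
    exact hiff.mp h2
  rw [intervalIntegral.integral_of_le hab, intervalIntegral.integral_of_le hab,
    intervalIntegral.integral_of_le hab]
  exact integral_mul_le_Lp_mul_Lq_of_nonneg hpq (hae A hA0) (hae B hB0)
    (mem p hpq.lt A (hae A hA0) hAm hAp.1)
    (mem q hpq.symm.lt B (hae B hB0) hBm hBq.1)

/-- continuous-on-Icc times integrable-on-Ioc is integrable. -/
lemma contOn_mul_integrableOn {a b : ℝ} (c h : ℝ → ℝ) (hc : ContinuousOn c (Icc a b))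
    (hh : IntegrableOn h (Ioc a b)) :
    IntegrableOn (fun x => c x * h x) (Ioc a b) := by
  obtain ⟨C, hC⟩ := isCompact_Icc.exists_bound_of_continuousOn hc
  apply hh.bdd_mul (c := C)
  · exact (hc.mono Ioc_subset_Icc_self).aestronglyMeasurable measurableSet_Ioc
  · filter_upwards [ae_restrict_mem measurableSet_Ioc] with x hx
    exact hC x (Ioc_subset_Icc_self hx)

/-- basic facts about primitives of nonnegative integrable functions -/
lemma primitive_facts {a b : ℝ} (hab : a ≤ b) (g : ℝ → ℝ)
    (hg0 : ∀ x ∈ Icc a b, 0 ≤ g x) (hgi : IntervalIntegrable g volume a b) :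
    (∀ c d, c ∈ Icc a b → d ∈ Icc a b → c ≤ d →
      (∫ t in a..c, g t) ≤ ∫ t in a..d, g t) ∧
    (∀ c ∈ Icc a b, 0 ≤ ∫ t in a..c, g t) ∧
    ContinuousOn (fun x => ∫ t in a..x, g t) (Icc a b) := by
  have hsub : ∀ c d : ℝ, c ∈ Icc a b → d ∈ Icc a b → IntervalIntegrable g volume c d := by
    intro c d hc hd
    exact hgi.mono_set (uIcc_subset_uIcc (by rw [uIcc_of_le hab]; exact hc)
      (by rw [uIcc_of_le hab]; exact hd))
  have hFdiff : ∀ c d : ℝ, c ∈ Icc a b → d ∈ Icc a b →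
      (∫ t in a..d, g t) - ∫ t in a..c, g t = ∫ t in c..d, g t := by
    intro c d hc hd
    have h1 := integral_add_adjacent_intervals (hsub a c (left_mem_Icc.mpr hab) hc)
      (hsub c d hc hd)
    linarith
  have hmono : ∀ c d, c ∈ Icc a b → d ∈ Icc a b → c ≤ d →
      (∫ t in a..c, g t) ≤ ∫ t in a..d, g t := by
    intro c d hc hd hcd
    have h2 : 0 ≤ ∫ t in c..d, g t :=
      intervalIntegral.integral_nonneg hcd (fun t ht => hg0 t ⟨hc.1.trans ht.1, ht.2.trans hd.2⟩)
    linarith [hFdiff c d hc hd]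
  refine ⟨hmono, ?_, ?_⟩
  · intro c hc
    have := hmono a c (left_mem_Icc.mpr hab) hc hc.1
    simpa using this
  · have h := intervalIntegral.continuousOn_primitive_interval (a := a) (b := b)
      (μ := volume) (f := g) ?_
    · rwa [uIcc_of_le hab] at h
    · rw [uIcc_of_le hab, ← intervalIntegrable_iff_integrableOn_Icc_of_le hab]
      exact hgi

lemma key_primitive (a b θ : ℝ) (hab : a ≤ b) (hθ : 0 ≤ θ) (g : ℝ → ℝ)
    (hg0 : ∀ x ∈ Icc a b, 0 ≤ g x) (hgi : IntervalIntegrable g volume a b)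
    (hFθg : IntervalIntegrable (fun x => (∫ t in a..x, g t) ^ θ * g x) volume a b) :
    ∫ x in a..b, (∫ t in a..x, g t) ^ θ * g x ≤ (∫ t in a..b, g t) ^ (θ + 1) / (θ + 1) := by
  set F : ℝ → ℝ := fun x => ∫ t in a..x, g t with hF
  have hθ1 : (0:ℝ) < θ + 1 := by linarith
  have hsub : ∀ c d : ℝ, c ∈ Icc a b → d ∈ Icc a b → IntervalIntegrable g volume c d := by
    intro c d hc hd
    exact hgi.mono_set (uIcc_subset_uIcc (by rw [uIcc_of_le hab]; exact hc)
      (by rw [uIcc_of_le hab]; exact hd))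
  have hFdiff : ∀ c d : ℝ, c ∈ Icc a b → d ∈ Icc a b →
      F d - F c = ∫ t in c..d, g t := by
    intro c d hc hd
    have h1 := integral_add_adjacent_intervals (hsub a c (left_mem_Icc.mpr hab) hc)
      (hsub c d hc hd)
    simp only [hF]
    linarith [h1]
  have hFmono : ∀ c d : ℝ, c ∈ Icc a b → d ∈ Icc a b → c ≤ d → F c ≤ F d := by
    intro c d hc hd hcd
    have h2 : 0 ≤ ∫ t in c..d, g t :=
      intervalIntegral.integral_nonneg hcd (fun t ht => hg0 t ⟨hc.1.trans ht.1, ht.2.trans hd.2⟩)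
    linarith [hFdiff c d hc hd]
  have hFa : F a = 0 := integral_same
  have hFnn : ∀ c ∈ Icc a b, 0 ≤ F c := fun c hc =>
    hFa ▸ hFmono a c (left_mem_Icc.mpr hab) hc hc.1
  have hFcont : ContinuousOn F (Icc a b) := by
    have h := intervalIntegral.continuousOn_primitive_interval (a := a) (b := b)
      (μ := volume) (f := g) ?_
    · rwa [uIcc_of_le hab] at h
    · rw [uIcc_of_le hab, ← intervalIntegrable_iff_integrableOn_Icc_of_le hab]
      exact hgi
  have hUC := isCompact_Icc.uniformContinuousOn_of_continuous hFcont
  rw [Metric.uniformContinuousOn_iff] at hUC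
  refine le_of_forall_pos_le_add ?_
  intro ε hε
  set M : ℝ := F b ^ θ with hM
  have hMnn : 0 ≤ M := Real.rpow_nonneg (hFnn b (right_mem_Icc.mpr hab)) θ
  set ε' : ℝ := ε / (M + 1) with hε'def
  have hε'pos : 0 < ε' := div_pos hε (by linarith)
  obtain ⟨δ, hδ, hδ'⟩ := hUC ε' hε'pos
  obtain ⟨n, hn⟩ := exists_nat_gt ((b - a) / δ)
  have hnpos : 0 < n := by
    have : (0:ℝ) ≤ (b - a) / δ := div_nonneg (by linarith) hδ.le
    exact_mod_cast Nat.cast_pos.mp (this.trans_lt hn)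
  have hn0 : (n:ℝ) ≠ 0 := Nat.cast_ne_zero.mpr hnpos.ne'
  set h : ℝ := (b - a) / n with hhdef
  have hh0 : 0 ≤ h := div_nonneg (by linarith) (Nat.cast_nonneg n)
  have hhδ : h < δ := by
    have h1 : b - a < ↑n * δ := (div_lt_iff₀ hδ).mp hn
    rw [hhdef, div_lt_iff₀ (by positivity : (0:ℝ) < (n:ℝ))]
    linarith
  set x : ℕ → ℝ := fun i => a + i * h with hxdef
  have hx0 : x 0 = a := by simp [hxdef]
  have hxn : x n = b := by
    simp only [hxdef, hhdef]
    field_simp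
    ring
  have hxmem : ∀ i : ℕ, i ≤ n → x i ∈ Icc a b := by
    intro i hi
    constructor
    · simp only [hxdef]; nlinarith [Nat.cast_nonneg (α := ℝ) i]
    · have : (i:ℝ) * h ≤ (n:ℝ) * h := by
        apply mul_le_mul_of_nonneg_right (by exact_mod_cast hi) hh0
      have hb : a + (n:ℝ) * h = b := by rw [hhdef]; field_simp; ring
      simp only [hxdef]; linarith
  have hxstep : ∀ i : ℕ, x (i+1) - x i = h := by
    intro i; simp only [hxdef]; push_cast; ring
  have hxle : ∀ i : ℕ, x i ≤ x (i+1) := fun i => by linarith [hxstep i]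
  have hadj : ∀ i, i < n → IntervalIntegrable (fun y => F y ^ θ * g y) volume (x i) (x (i+1)) := by
    intro i hi
    exact hFθg.mono_set (uIcc_subset_uIcc
      (by rw [uIcc_of_le hab]; exact hxmem i hi.le)
      (by rw [uIcc_of_le hab]; exact hxmem (i+1) hi))
  have hsum := intervalIntegral.sum_integral_adjacent_intervals hadj
  rw [hx0, hxn] at hsum
  -- piece bound
  have hpiece : ∀ i, i < n → ∫ t in x i..x (i+1), F t ^ θ * g t ≤
      (F (x (i+1)) ^ (θ+1) - F (x i) ^ (θ+1)) / (θ+1) + (F (x (i+1)) ^ θ - F (x i) ^ θ) * ε' := by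
    intro i hi
    have hmi := hxmem i hi.le
    have hmi1 := hxmem (i+1) hi
    have step1 : ∫ t in x i..x (i+1), F t ^ θ * g t ≤
        ∫ t in x i..x (i+1), F (x (i+1)) ^ θ * g t := by
      apply integral_mono_on (hxle i) (hadj i hi)
        ((hsub _ _ hmi hmi1).const_mul _)
      intro t ht
      have htm : t ∈ Icc a b := ⟨hmi.1.trans ht.1, ht.2.trans hmi1.2⟩
      apply mul_le_mul_of_nonneg_right _ (hg0 t htm)
      exact Real.rpow_le_rpow (hFnn t htm) (hFmono t (x (i+1)) htm hmi1 ht.2) hθ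
    have step2 : ∫ t in x i..x (i+1), F (x (i+1)) ^ θ * g t =
        F (x (i+1)) ^ θ * (F (x (i+1)) - F (x i)) := by
      rw [intervalIntegral.integral_const_mul, ← hFdiff _ _ hmi hmi1]
    have hu : 0 ≤ F (x i) := hFnn _ hmi
    have huv : F (x i) ≤ F (x (i+1)) := hFmono _ _ hmi hmi1 (hxle i)
    have hgap := rpow_gap hθ hu huv
    have hosc : F (x (i+1)) - F (x i) ≤ ε' := by
      have hd : dist (x (i+1)) (x i) < δ := by
        rw [Real.dist_eq, hxstep i, abs_of_nonneg hh0]; exact hhδ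
      have := hδ' (x (i+1)) hmi1 (x i) hmi hd
      rw [Real.dist_eq] at this
      calc F (x (i+1)) - F (x i) ≤ |F (x (i+1)) - F (x i)| := le_abs_self _
        _ ≤ ε' := this.le
    have h3 : 0 ≤ F (x (i+1)) ^ θ - F (x i) ^ θ := by
      have := Real.rpow_le_rpow hu huv hθ; linarith
    nlinarith [mul_le_mul_of_nonneg_left hosc h3, step2 ▸ step1]
  calc ∫ y in a..b, F y ^ θ * g y
      = ∑ i ∈ Finset.range n, ∫ t in x i..x (i+1), F t ^ θ * g t := hsum.symm
    _ ≤ ∑ i ∈ Finset.range n, ((F (x (i+1)) ^ (θ+1) - F (x i) ^ (θ+1)) / (θ+1)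
          + (F (x (i+1)) ^ θ - F (x i) ^ θ) * ε') := by
        apply Finset.sum_le_sum
        intro i hi
        exact hpiece i (Finset.mem_range.mp hi)
    _ = (F (x n) ^ (θ+1) - F (x 0) ^ (θ+1)) / (θ+1) + (F (x n) ^ θ - F (x 0) ^ θ) * ε' := by
        rw [Finset.sum_add_distrib, ← Finset.sum_div, ← Finset.sum_mul,
          Finset.sum_range_sub (fun i => F (x i) ^ (θ+1)),
          Finset.sum_range_sub (fun i => F (x i) ^ θ)]
    _ ≤ F b ^ (θ+1) / (θ+1) + ε := by
        rw [hx0, hxn, hFa, Real.zero_rpow hθ1.ne']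
        have h0θ : 0 ≤ (0:ℝ) ^ θ := Real.rpow_nonneg le_rfl θ
        have : (M - (0:ℝ)^θ) * ε' ≤ M * ε' := by nlinarith
        have hMε : M * ε' ≤ ε := by
          rw [hε'def, mul_comm, div_mul_eq_mul_div, div_le_iff₀ (by linarith : (0:ℝ) < M + 1)]
          nlinarith
        have hfin : (M - (0:ℝ)^θ) * ε' ≤ ε := le_trans this hMε
        rw [sub_zero]
        linarith


/-- Weighted one-dimensional Opial-type inequality (real case of Corollary 3.17):
for `α, β > 0`, `α + β > 1`, positive continuous weights `τ, ω` on `[a,b]`, and `f`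
absolutely continuous with `f a = 0` and `f' ∈ L^{α+β}(τ)`,
`∫ₐᵇ |f|^β |f'|^α ω ≤ (α/(α+β))^(α/(α+β)) · L · ∫ₐᵇ |f'|^(α+β) τ`, where
`L = (∫ₐᵇ (∫ₐˣ τ^{1/(1−α−β)})^{α+β−1} ω^{(α+β)/β} τ^{−α/β})^{β/(α+β)}`. -/
theorem opial_power_weighted (a b α β : ℝ) (hab : a < b)
    (hα : 0 < α) (hβ : 0 < β) (hαβ : 1 < α + β)
    (τ ω : ℝ → ℝ)
    (hτcont : ContinuousOn τ (Set.Icc a b)) (hτpos : ∀ x ∈ Set.Icc a b, 0 < τ x)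
    (hωcont : ContinuousOn ω (Set.Icc a b)) (hωpos : ∀ x ∈ Set.Icc a b, 0 < ω x)
    (f f' : ℝ → ℝ)
    (hf' : IntervalIntegrable f' MeasureTheory.volume a b)
    (hf'p : IntervalIntegrable (fun x => |f' x| ^ (α + β) * τ x) MeasureTheory.volume a b)
    (hf : ∀ x ∈ Set.Icc a b, f x = ∫ t in a..x, f' t)
    (hfa : f a = 0)
    (L : ℝ)
    (hL : L = (∫ x in a..b,
        (∫ t in a..x, τ t ^ (1 / (1 - α - β))) ^ (α + β - 1) *
          (ω x ^ ((α + β) / β) * τ x ^ (-(α / β)))) ^ (β / (α + β))) :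
    ∫ x in a..b, |f x| ^ β * |f' x| ^ α * ω x ≤
      (α / (α + β)) ^ (α / (α + β)) * L * ∫ x in a..b, |f' x| ^ (α + β) * τ x := by
  have hab' : a ≤ b := hab.le
  set p := α + β with hpdef
  have hp1 : 1 < p := hαβ
  have hp0 : 0 < p := by linarith
  have hp1' : (0:ℝ) < p - 1 := by linarith
  have hαp : α < p := by rw [hpdef]; linarith
  have hβp : β < p := by rw [hpdef]; linarith
  set q := p / (p - 1) with hqdef
  have hq1 : 1 < q := by
    rw [hqdef, lt_div_iff₀ hp1']; linarith
  have hq0 : 0 < q := by linarith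
  have hqp : q.HolderConjugate p := by
    rw [Real.holderConjugate_iff]
    constructor
    · exact hq1
    · rw [hqdef]; field_simp; ring
  have hpq2 : (p/β).HolderConjugate (p/α) := by
    rw [Real.holderConjugate_iff]
    constructor
    · rw [lt_div_iff₀ hβ]; linarith
    · rw [hpdef]; field_simp; ring
  set g : ℝ → ℝ := fun x => |f' x| ^ p * τ x with hgdef
  have hgi : IntervalIntegrable g volume a b := hf'p
  have hg0 : ∀ x ∈ Icc a b, 0 ≤ g x := by
    intro x hx
    exact mul_nonneg (Real.rpow_nonneg (abs_nonneg _) _) (hτpos x hx).le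
  set F : ℝ → ℝ := fun x => ∫ t in a..x, g t with hFdef
  set G : ℝ → ℝ := fun x => ∫ t in a..x, τ t ^ (1 / (1 - α - β)) with hGdef
  -- continuity of rpow-weights
  have hτpow : ∀ r : ℝ, ContinuousOn (fun t => τ t ^ r) (Icc a b) :=
    fun r => hτcont.rpow_const (fun x hx => Or.inl (hτpos x hx).ne')
  have hωpow : ∀ r : ℝ, ContinuousOn (fun t => ω t ^ r) (Icc a b) :=
    fun r => hωcont.rpow_const (fun x hx => Or.inl (hωpos x hx).ne')
  have hτii : IntervalIntegrable (fun t => τ t ^ (1 / (1 - α - β))) volume a b := by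
    apply ContinuousOn.intervalIntegrable
    rw [uIcc_of_le hab']; exact hτpow _
  have hGfacts := primitive_facts hab' _
    (fun x _ => Real.rpow_nonneg (hτpos x ‹_›).le _) hτii
  obtain ⟨hGmono, hGnn, hGcont⟩ := hGfacts
  obtain ⟨hFmono, hFnn, hFcont⟩ := primitive_facts hab' g hg0 hgi
  have hf'm : AEStronglyMeasurable f' (volume.restrict (Ioc a b)) := hf'.1.aestronglyMeasurable
  have habsα : AEStronglyMeasurable (fun t => |f' t| ^ α) (volume.restrict (Ioc a b)) :=
    (Real.continuous_rpow_const hα.le).comp_aestronglyMeasurable (continuous_abs.comp_aestronglyMeasurable hf'm)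
  -- Step A : pointwise Hölder bound
  have stepA : ∀ x ∈ Icc a b, |f x| ≤ G x ^ (1/q) * F x ^ (1/p) := by
    intro x hx
    have hax : a ≤ x := hx.1
    have hIccsub : Icc a x ⊆ Icc a b := Icc_subset_Icc le_rfl hx.2
    have hIocsub : Ioc a x ⊆ Ioc a b := Ioc_subset_Ioc le_rfl hx.2
    set A : ℝ → ℝ := fun t => τ t ^ (-(1/p)) with hAdef
    set B : ℝ → ℝ := fun t => |f' t| * τ t ^ (1/p) with hBdef
    have hA0 : ∀ t ∈ Icc a x, 0 ≤ A t := fun t ht =>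
      Real.rpow_nonneg (hτpos t (hIccsub ht)).le _
    have hB0 : ∀ t ∈ Icc a x, 0 ≤ B t := fun t ht =>
      mul_nonneg (abs_nonneg _) (Real.rpow_nonneg (hτpos t (hIccsub ht)).le _)
    have hAm : AEStronglyMeasurable A (volume.restrict (Ioc a x)) :=
      ((hτpow (-(1/p))).mono (Ioc_subset_Icc_self.trans hIccsub)).aestronglyMeasurable
        measurableSet_Ioc
    have hBm : AEStronglyMeasurable B (volume.restrict (Ioc a x)) := by
      apply AEStronglyMeasurable.mul
      · exact ((continuous_abs.comp_aestronglyMeasurable hf'm)).mono_measure (Measure.restrict_mono hIocsub le_rfl)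
      · exact ((hτpow (1/p)).mono (Ioc_subset_Icc_self.trans hIccsub)).aestronglyMeasurable
          measurableSet_Ioc
    have hAq : IntervalIntegrable (fun t => A t ^ q) volume a x := by
      apply ContinuousOn.intervalIntegrable
      rw [uIcc_of_le hax]
      apply ContinuousOn.rpow_const ((hτpow (-(1/p))).mono hIccsub)
      intro t ht
      exact Or.inl (Real.rpow_pos_of_pos (hτpos t (hIccsub ht)) _).ne'
    have hBeq : ∀ t ∈ Icc a b, B t ^ p = g t := by
      intro t ht
      have hτt := hτpos t ht
      rw [hBdef, hgdef]
      simp only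
      rw [Real.mul_rpow (abs_nonneg _) (Real.rpow_nonneg hτt.le _),
        ← Real.rpow_mul hτt.le, one_div_mul_cancel hp0.ne', Real.rpow_one]
    have hBp : IntervalIntegrable (fun t => B t ^ p) volume a x := by
      rw [intervalIntegrable_iff_integrableOn_Ioc_of_le hax]
      apply (hgi.1.mono_set hIocsub).congr
      filter_upwards [ae_restrict_mem measurableSet_Ioc] with t ht
      exact (hBeq t (Ioc_subset_Icc_self (hIocsub ht))).symm
    have h1 : |f x| ≤ ∫ t in a..x, |f' t| := by
      rw [hf x hx]
      exact intervalIntegral.abs_integral_le_integral_abs hax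
    have h2 : (∫ t in a..x, |f' t|) = ∫ t in a..x, A t * B t := by
      apply intervalIntegral.integral_congr
      intro t ht
      rw [uIcc_of_le hax] at ht
      have hτt := hτpos t (hIccsub ht)
      have hcancel : τ t ^ (-(1/p)) * τ t ^ (1/p) = 1 := by
        rw [← Real.rpow_add hτt]; simp
      simp only [hAdef, hBdef]
      calc |f' t| = |f' t| * (τ t ^ (-(1/p)) * τ t ^ (1/p)) := by rw [hcancel, mul_one]
        _ = τ t ^ (-(1/p)) * (|f' t| * τ t ^ (1/p)) := by ring
    have h3 := holder_interval q p hax hqp A B hA0 hB0 hAm hBm hAq hBp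
    have hne : (1:ℝ) - α - β ≠ 0 := by
      have : 1 - α - β < 0 := by linarith [hpdef ▸ hp1]
      linarith
    have e1 : (∫ t in a..x, A t ^ q) = G x := by
      rw [hGdef]
      apply intervalIntegral.integral_congr
      intro t ht
      rw [uIcc_of_le hax] at ht
      have hτt := hτpos t (hIccsub ht)
      simp only [hAdef]
      rw [← Real.rpow_mul hτt.le]
      congr 1
      rw [hqdef, hpdef]
      have hne' : α + β - 1 ≠ 0 := by intro h0; apply hne; linarith
      field_simp
      ring
    have e2 : (∫ t in a..x, B t ^ p) = F x := by
      rw [hFdef]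
      apply intervalIntegral.integral_congr
      intro t ht
      rw [uIcc_of_le hax] at ht
      exact hBeq t (hIccsub ht)
    calc |f x| ≤ ∫ t in a..x, |f' t| := h1
      _ = ∫ t in a..x, A t * B t := h2
      _ ≤ (∫ t in a..x, A t ^ q) ^ (1/q) * (∫ t in a..x, B t ^ p) ^ (1/p) := h3
      _ = G x ^ (1/q) * F x ^ (1/p) := by rw [e1, e2]
  -- Step B setup
  set A2 : ℝ → ℝ := fun x => G x ^ (β/q) * (ω x * τ x ^ (-(α/p))) with hA2def
  set B2 : ℝ → ℝ := fun x => F x ^ (β/p) * (|f' x| ^ α * τ x ^ (α/p)) with hB2def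
  have hA20 : ∀ x ∈ Icc a b, 0 ≤ A2 x := fun x hx =>
    mul_nonneg (Real.rpow_nonneg (hGnn x hx) _)
      (mul_nonneg (hωpos x hx).le (Real.rpow_nonneg (hτpos x hx).le _))
  have hB20 : ∀ x ∈ Icc a b, 0 ≤ B2 x := fun x hx =>
    mul_nonneg (Real.rpow_nonneg (hFnn x hx) _)
      (mul_nonneg (Real.rpow_nonneg (abs_nonneg _) _) (Real.rpow_nonneg (hτpos x hx).le _))
  have hA2B2 : ∀ x ∈ Icc a b,
      A2 x * B2 x = G x ^ (β/q) * F x ^ (β/p) * ω x * |f' x| ^ α := by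
    intro x hx
    have hcancel : τ x ^ (-(α/p)) * τ x ^ (α/p) = 1 := by
      rw [← Real.rpow_add (hτpos x hx)]; simp
    simp only [hA2def, hB2def]
    calc G x ^ (β/q) * (ω x * τ x ^ (-(α/p))) * (F x ^ (β/p) * (|f' x| ^ α * τ x ^ (α/p)))
        = G x ^ (β/q) * F x ^ (β/p) * ω x * |f' x| ^ α * (τ x ^ (-(α/p)) * τ x ^ (α/p)) := by
          ring
      _ = _ := by rw [hcancel, mul_one]
  -- pointwise bound of the left integrand
  have big1 : ∀ x ∈ Icc a b, |f x| ^ β * |f' x| ^ α * ω x ≤ A2 x * B2 x := by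
    intro x hx
    have hG0 := hGnn x hx
    have hF0 := hFnn x hx
    have h := stepA x hx
    have h2 : (G x ^ (1/q) * F x ^ (1/p)) ^ β = G x ^ (β/q) * F x ^ (β/p) := by
      rw [Real.mul_rpow (Real.rpow_nonneg hG0 _) (Real.rpow_nonneg hF0 _),
        ← Real.rpow_mul hG0, ← Real.rpow_mul hF0,
        one_div_mul_eq_div, one_div_mul_eq_div]
    have hstep : |f x| ^ β ≤ G x ^ (β/q) * F x ^ (β/p) := by
      rw [← h2]
      exact Real.rpow_le_rpow (abs_nonneg _) h hβ.le
    have hmul : |f x| ^ β * (|f' x| ^ α * ω x) ≤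
        G x ^ (β/q) * F x ^ (β/p) * (|f' x| ^ α * ω x) := mul_le_mul_of_nonneg_right hstep
      (mul_nonneg (Real.rpow_nonneg (abs_nonneg _) _) (hωpos x hx).le)
    calc |f x| ^ β * |f' x| ^ α * ω x = |f x| ^ β * (|f' x| ^ α * ω x) := by ring
      _ ≤ G x ^ (β/q) * F x ^ (β/p) * (|f' x| ^ α * ω x) := hmul
      _ = A2 x * B2 x := by rw [hA2B2 x hx]; ring
  -- |f'|^α is integrable
  obtain ⟨x₀, hx₀, hminτ⟩ := isCompact_Icc.exists_isMinOn (nonempty_Icc.mpr hab') hτcont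
  set c : ℝ := τ x₀ with hcdef
  have hc0 : 0 < c := hτpos x₀ hx₀
  have hcle : ∀ x ∈ Icc a b, c ≤ τ x := fun x hx => hminτ hx
  have hαint : IntegrableOn (fun t => |f' t| ^ α) (Ioc a b) := by
    apply Integrable.mono' (g := fun t => 1 + c⁻¹ * g t)
    · exact (integrable_const 1).add (hgi.1.const_mul _)
    · exact habsα
    · filter_upwards [ae_restrict_mem measurableSet_Ioc] with t ht
      have htm : t ∈ Icc a b := Ioc_subset_Icc_self ht
      have hτt := hτpos t htm
      rw [Real.norm_of_nonneg (Real.rpow_nonneg (abs_nonneg _) _)]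
      rcases le_or_gt (|f' t|) 1 with h1 | h1
      · have hle1 : |f' t| ^ α ≤ 1 := Real.rpow_le_one (abs_nonneg _) h1 hα.le
        have hgt : 0 ≤ c⁻¹ * g t := mul_nonneg (inv_nonneg.mpr hc0.le) (hg0 t htm)
        linarith
      · have h2 : |f' t| ^ α ≤ |f' t| ^ p := Real.rpow_le_rpow_of_exponent_le h1.le hαp.le
        have h4 : c * |f' t| ^ p ≤ τ t * |f' t| ^ p :=
          mul_le_mul_of_nonneg_right (hcle t htm) (Real.rpow_nonneg (abs_nonneg _) _)
        have h3 : |f' t| ^ p ≤ c⁻¹ * g t := by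
          rw [hgdef]
          simp only
          calc |f' t| ^ p = c⁻¹ * (c * |f' t| ^ p) := by field_simp
            _ ≤ c⁻¹ * (τ t * |f' t| ^ p) :=
                mul_le_mul_of_nonneg_left h4 (inv_nonneg.mpr hc0.le)
            _ = c⁻¹ * (|f' t| ^ p * τ t) := by ring
        linarith
  -- continuity of f on [a,b]
  have hfcont : ContinuousOn f (Icc a b) := by
    have hprim : ContinuousOn (fun x => ∫ t in a..x, f' t) (Icc a b) := by
      have h := intervalIntegral.continuousOn_primitive_interval (a := a) (b := b)
        (μ := volume) (f := f') ?_
      · rwa [uIcc_of_le hab'] at h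
      · rw [uIcc_of_le hab', ← intervalIntegrable_iff_integrableOn_Icc_of_le hab']
        exact hf'
    exact hprim.congr hf
  -- measurability of A2 and B2
  have hGpow : ∀ r : ℝ, 0 ≤ r → ContinuousOn (fun x => G x ^ r) (Icc a b) :=
    fun r hr => hGcont.rpow_const (fun x hx => Or.inr hr)
  have hFpow : ∀ r : ℝ, 0 ≤ r → ContinuousOn (fun x => F x ^ r) (Icc a b) :=
    fun r hr => hFcont.rpow_const (fun x hx => Or.inr hr)
  have hA2cont : ContinuousOn A2 (Icc a b) :=
    (hGpow _ (by positivity)).mul (hωcont.mul (hτpow _))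
  have hA2m : AEStronglyMeasurable A2 (volume.restrict (Ioc a b)) :=
    (hA2cont.mono Ioc_subset_Icc_self).aestronglyMeasurable measurableSet_Ioc
  have hB2m : AEStronglyMeasurable B2 (volume.restrict (Ioc a b)) := by
    apply AEStronglyMeasurable.mul
    · exact ((hFpow _ (by positivity)).mono Ioc_subset_Icc_self).aestronglyMeasurable
        measurableSet_Ioc
    · exact habsα.mul (((hτpow (α/p)).mono Ioc_subset_Icc_self).aestronglyMeasurable
        measurableSet_Ioc)
  -- integrability of A2 * B2 and LHS integrand
  have hABint : IntervalIntegrable (fun x => A2 x * B2 x) volume a b := by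
    rw [intervalIntegrable_iff_integrableOn_Ioc_of_le hab']
    have hC : ContinuousOn (fun x => G x ^ (β/q) * F x ^ (β/p) * ω x) (Icc a b) :=
      ((hGpow _ (by positivity)).mul (hFpow _ (by positivity))).mul hωcont
    have h1 := contOn_mul_integrableOn _ _ hC hαint
    apply h1.congr
    filter_upwards [ae_restrict_mem measurableSet_Ioc] with x hx
    rw [hA2B2 x (Ioc_subset_Icc_self hx)]
  have hLHSint : IntervalIntegrable (fun x => |f x| ^ β * |f' x| ^ α * ω x) volume a b := by
    rw [intervalIntegrable_iff_integrableOn_Ioc_of_le hab']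
    have hC : ContinuousOn (fun x => |f x| ^ β * ω x) (Icc a b) :=
      (((continuous_abs.comp_continuousOn hfcont)).rpow_const
        (fun x hx => Or.inr hβ.le)).mul hωcont
    have h1 := contOn_mul_integrableOn _ _ hC hαint
    apply h1.congr
    filter_upwards [ae_restrict_mem measurableSet_Ioc] with x hx
    ring
  -- rpow expansions
  have hA2pow : ∀ x ∈ Icc a b,
      A2 x ^ (p/β) = G x ^ (p - 1) * (ω x ^ (p/β) * τ x ^ (-(α/β))) := by
    intro x hx
    have hτx := hτpos x hx
    have hωx := hωpos x hx
    have hGx := hGnn x hx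
    simp only [hA2def]
    rw [Real.mul_rpow (Real.rpow_nonneg hGx _)
        (mul_nonneg hωx.le (Real.rpow_nonneg hτx.le _)),
      ← Real.rpow_mul hGx,
      Real.mul_rpow hωx.le (Real.rpow_nonneg hτx.le _),
      ← Real.rpow_mul hτx.le]
    have e1 : β/q * (p/β) = p - 1 := by
      rw [hqdef]; field_simp
    have e2 : -(α/p) * (p/β) = -(α/β) := by
      field_simp
    rw [e1, e2]
  have hB2pow : ∀ x ∈ Icc a b, B2 x ^ (p/α) = F x ^ (β/α) * g x := by
    intro x hx
    have hτx := hτpos x hx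
    have hFx := hFnn x hx
    simp only [hB2def, hgdef]
    rw [Real.mul_rpow (Real.rpow_nonneg hFx _)
        (mul_nonneg (Real.rpow_nonneg (abs_nonneg _) _) (Real.rpow_nonneg hτx.le _)),
      ← Real.rpow_mul hFx,
      Real.mul_rpow (Real.rpow_nonneg (abs_nonneg _) _) (Real.rpow_nonneg hτx.le _),
      ← Real.rpow_mul (abs_nonneg _), ← Real.rpow_mul hτx.le]
    have e1 : β/p * (p/α) = β/α := by field_simp
    have e2 : α * (p/α) = p := by field_simp
    have e3 : α/p * (p/α) = 1 := by field_simp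
    rw [e1, e2, e3, Real.rpow_one]
  -- integrability of the powers
  have hA2p : IntervalIntegrable (fun x => A2 x ^ (p/β)) volume a b := by
    rw [intervalIntegrable_iff_integrableOn_Ioc_of_le hab']
    have hC : ContinuousOn (fun x => G x ^ (p - 1) * (ω x ^ (p/β) * τ x ^ (-(α/β))))
        (Icc a b) := (hGpow _ (by linarith)).mul ((hωpow _).mul (hτpow _))
    have h1 : IntegrableOn (fun x => G x ^ (p - 1) * (ω x ^ (p/β) * τ x ^ (-(α/β))))
        (Ioc a b) := by
      rw [← intervalIntegrable_iff_integrableOn_Ioc_of_le hab'] at *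
      apply ContinuousOn.intervalIntegrable
      rwa [uIcc_of_le hab']
    apply h1.congr
    filter_upwards [ae_restrict_mem measurableSet_Ioc] with x hx
    exact (hA2pow x (Ioc_subset_Icc_self hx)).symm
  have hFβg : IntervalIntegrable (fun x => F x ^ (β/α) * g x) volume a b := by
    rw [intervalIntegrable_iff_integrableOn_Ioc_of_le hab']
    exact contOn_mul_integrableOn _ _ (hFpow _ (by positivity)) hgi.1
  have hB2q : IntervalIntegrable (fun x => B2 x ^ (p/α)) volume a b := by
    rw [intervalIntegrable_iff_integrableOn_Ioc_of_le hab']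
    apply ((intervalIntegrable_iff_integrableOn_Ioc_of_le hab').mp hFβg).congr
    filter_upwards [ae_restrict_mem measurableSet_Ioc] with x hx
    exact (hB2pow x (Ioc_subset_Icc_self hx)).symm
  -- Hölder
  have holder := holder_interval (p/β) (p/α) hab' hpq2 A2 B2 hA20 hB20 hA2m hB2m hA2p hB2q
  rw [one_div_div, one_div_div] at holder
  -- first factor is L
  have factor1 : (∫ x in a..b, A2 x ^ (p/β)) ^ (β/p) = L := by
    rw [hL]
    congr 1
    apply intervalIntegral.integral_congr
    intro x hx
    rw [uIcc_of_le hab'] at hx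
    exact hA2pow x hx
  -- second factor bound via key lemma
  have hFb0 : 0 ≤ F b := hFnn b (right_mem_Icc.mpr hab')
  have factor2 : (∫ x in a..b, B2 x ^ (p/α)) ^ (α/p) ≤ (α/p) ^ (α/p) * F b := by
    have e : (∫ x in a..b, B2 x ^ (p/α)) = ∫ x in a..b, F x ^ (β/α) * g x := by
      apply intervalIntegral.integral_congr
      intro x hx
      rw [uIcc_of_le hab'] at hx
      exact hB2pow x hx
    have k := key_primitive a b (β/α) hab' (by positivity) g hg0 hgi hFβg
    have eθ : β/α + 1 = p/α := by rw [hpdef]; field_simp; ring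
    rw [eθ] at k
    have hdiv : (∫ t in a..b, g t) ^ (p/α) / (p/α) = (α/p) * F b ^ (p/α) := by
      have hFbe : F b = ∫ t in a..b, g t := rfl
      rw [← hFbe, div_div_eq_mul_div]
      ring
    have hint0 : 0 ≤ ∫ x in a..b, B2 x ^ (p/α) :=
      intervalIntegral.integral_nonneg hab' (fun x hx => Real.rpow_nonneg (hB20 x hx) _)
    have k2 : (∫ x in a..b, B2 x ^ (p/α)) ≤ (α/p) * F b ^ (p/α) := by
      rw [e, ← hdiv]; exact k
    calc (∫ x in a..b, B2 x ^ (p/α)) ^ (α/p)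
        ≤ ((α/p) * F b ^ (p/α)) ^ (α/p) := Real.rpow_le_rpow hint0 k2 (by positivity)
      _ = (α/p) ^ (α/p) * F b := by
          rw [Real.mul_rpow (by positivity) (Real.rpow_nonneg hFb0 _),
            ← Real.rpow_mul hFb0]
          have e4 : p/α * (α/p) = 1 := by field_simp
          rw [e4, Real.rpow_one]
  have hL0 : 0 ≤ L := by
    rw [hL]
    apply Real.rpow_nonneg
    apply intervalIntegral.integral_nonneg hab'
    intro x hx
    exact mul_nonneg (Real.rpow_nonneg (hGnn x hx) _)
      (mul_nonneg (Real.rpow_nonneg (hωpos x hx).le _) (Real.rpow_nonneg (hτpos x hx).le _))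
  -- final assembly
  have mono1 : ∫ x in a..b, |f x| ^ β * |f' x| ^ α * ω x ≤ ∫ x in a..b, A2 x * B2 x :=
    intervalIntegral.integral_mono_on hab' hLHSint hABint big1
  have hFbeq : F b = ∫ x in a..b, |f' x| ^ p * τ x := rfl
  calc ∫ x in a..b, |f x| ^ β * |f' x| ^ α * ω x
      ≤ ∫ x in a..b, A2 x * B2 x := mono1
    _ ≤ (∫ x in a..b, A2 x ^ (p/β)) ^ (β/p) * (∫ x in a..b, B2 x ^ (p/α)) ^ (α/p) := holder
    _ = L * (∫ x in a..b, B2 x ^ (p/α)) ^ (α/p) := by rw [factor1]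
    _ ≤ L * ((α/p) ^ (α/p) * F b) := mul_le_mul_of_nonneg_left factor2 hL0
    _ = (α/p) ^ (α/p) * L * ∫ x in a..b, |f' x| ^ p * τ x := by rw [← hFbeq]; ring
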